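/- Let S ⊆ ℝ³ be invariant under all rotations about a unit axis u, and suppose S is not invariant under all of SO(3). If S is invariant under R_v(2π/n) for some unit vector v not orthogonal and not collinear to u and some integer n ≥ 1, then n = 1; i.e., S has no nontrivial finite rotational symmetry about any axis oblique to u. -/

import Mathlib

/-- Rotation of ℝ³ by angle `φ` about the axis through the origin in direction `u`
(Rodrigues' formula; when `‖u‖ = 1` this is the usual rotation `R_u(φ)`). -/
noncomputable def rot (u : EuclideanSpace ℝ (Fin 3)) (φ : ℝ) (x : EuclideanSpace ℝ (Fin 3)) :
    EuclideanSpace ℝ (Fin 3) :=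
  let c : EuclideanSpace ℝ (Fin 3) := WithLp.toLp 2 (crossProduct (WithLp.ofLp u) (WithLp.ofLp x))
  Real.cos φ • x + Real.sin φ • c + ((1 - Real.cos φ) * (inner ℝ u x : ℝ)) • u

namespace Oblique

local notation "E3" => EuclideanSpace ℝ (Fin 3)

open Matrix

def cp (a b : E3) : E3 := WithLp.toLp 2 (crossProduct (WithLp.ofLp a) (WithLp.ofLp b))

lemma inner3 (x y : E3) : (inner ℝ x y : ℝ) = x 0 * y 0 + x 1 * y 1 + x 2 * y 2 := by
  simp [PiLp.inner_apply, Fin.sum_univ_three, mul_comm]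

lemma rot_coord (u : E3) (φ : ℝ) (x : E3) (i : Fin 3) :
    rot u φ x i = Real.cos φ * x i + Real.sin φ * (cp u x) i
      + ((1 - Real.cos φ) * (inner ℝ u x : ℝ)) * u i := by
  simp [rot, cp, PiLp.add_apply, PiLp.smul_apply, smul_eq_mul]

lemma unit_iff (u : E3) : ‖u‖ = 1 ↔ u 0 ^ 2 + u 1 ^ 2 + u 2 ^ 2 = 1 := by
  have h2 : (inner ℝ u u : ℝ) = ‖u‖ ^ 2 := real_inner_self_eq_norm_sq u
  rw [inner3] at h2
  constructor
  · intro h; rw [h] at h2; nlinarith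
  · intro h
    have h3 : ‖u‖ ^ 2 = 1 := by nlinarith
    have h4 : (‖u‖ - 1) * (‖u‖ + 1) = 0 := by nlinarith
    rcases mul_eq_zero.mp h4 with h5 | h5
    · linarith
    · nlinarith [norm_nonneg u]

lemma cross0 (a b : E3) : cp a b 0 = a 1 * b 2 - a 2 * b 1 := by
  simp [cp, cross_apply]
lemma cross1 (a b : E3) : cp a b 1 = a 2 * b 0 - a 0 * b 2 := by
  simp [cp, cross_apply]
lemma cross2 (a b : E3) : cp a b 2 = a 0 * b 1 - a 1 * b 0 := by
  simp [cp, cross_apply]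

lemma ext3 {x y : E3} (h0 : x 0 = y 0) (h1 : x 1 = y 1) (h2 : x 2 = y 2) : x = y := by
  ext i
  fin_cases i
  exacts [h0, h1, h2]

lemma smul_coord (r : ℝ) (x : E3) (i : Fin 3) : (r • x) i = r * x i := by
  simp [PiLp.smul_apply]

lemma add_coord (x y : E3) (i : Fin 3) : (x + y) i = x i + y i := by
  simp [PiLp.add_apply]

lemma sub_coord (x y : E3) (i : Fin 3) : (x - y) i = x i - y i := by
  simp [PiLp.sub_apply]

lemma zero_coord (i : Fin 3) : (0 : E3) i = 0 := rfl

lemma neg_coord (x : E3) (i : Fin 3) : (-x) i = -(x i) := rfl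

lemma rot_zero (u x : E3) : rot u 0 x = x := by
  simp [rot]

lemma rot_rot (u : E3) (hu' : ‖u‖ = 1) (φ ψ : ℝ) (x : E3) :
    rot u φ (rot u ψ x) = rot u (φ + ψ) x := by
  have hu := (unit_iff u).mp hu'
  apply ext3 <;>
    simp only [rot_coord, cross0, cross1, cross2, inner3, Real.cos_add, Real.sin_add,
      mul_zero, add_zero]
  · linear_combination (Real.cos φ * Real.cos ψ * u 0 * u 1 * x 1 + Real.cos φ * Real.cos ψ * u 0 * u 2 * x 2 + Real.cos φ * Real.cos ψ * u 0 * u 0 * x 0 + (-1) * Real.cos φ * u 0 * u 1 * x 1 + (-1) * Real.cos φ * u 0 * u 2 * x 2 + (-1) * Real.cos φ * u 0 * u 0 * x 0 + (-1) * Real.cos ψ * u 0 * u 1 * x 1 + (-1) * Real.cos ψ * u 0 * u 2 * x 2 + (-1) * Real.cos ψ * u 0 * u 0 * x 0 + (-1) * Real.sin φ * Real.sin ψ * x 0 + u 0 * u 1 * x 1 + u 0 * u 2 * x 2 + u 0 * u 0 * x 0) * hu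
  · linear_combination (Real.cos φ * Real.cos ψ * u 0 * u 1 * x 0 + Real.cos φ * Real.cos ψ * u 1 * u 2 * x 2 + Real.cos φ * Real.cos ψ * u 1 * u 1 * x 1 + (-1) * Real.cos φ * u 0 * u 1 * x 0 + (-1) * Real.cos φ * u 1 * u 2 * x 2 + (-1) * Real.cos φ * u 1 * u 1 * x 1 + (-1) * Real.cos ψ * u 0 * u 1 * x 0 + (-1) * Real.cos ψ * u 1 * u 2 * x 2 + (-1) * Real.cos ψ * u 1 * u 1 * x 1 + (-1) * Real.sin φ * Real.sin ψ * x 1 + u 0 * u 1 * x 0 + u 1 * u 2 * x 2 + u 1 * u 1 * x 1) * hu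
  · linear_combination (Real.cos φ * Real.cos ψ * u 0 * u 2 * x 0 + Real.cos φ * Real.cos ψ * u 1 * u 2 * x 1 + Real.cos φ * Real.cos ψ * u 2 * u 2 * x 2 + (-1) * Real.cos φ * u 0 * u 2 * x 0 + (-1) * Real.cos φ * u 1 * u 2 * x 1 + (-1) * Real.cos φ * u 2 * u 2 * x 2 + (-1) * Real.cos ψ * u 0 * u 2 * x 0 + (-1) * Real.cos ψ * u 1 * u 2 * x 1 + (-1) * Real.cos ψ * u 2 * u 2 * x 2 + (-1) * Real.sin φ * Real.sin ψ * x 2 + u 0 * u 2 * x 0 + u 1 * u 2 * x 1 + u 2 * u 2 * x 2) * hu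

lemma rot_add (u : E3) (φ : ℝ) (x y : E3) : rot u φ (x + y) = rot u φ x + rot u φ y := by
  apply ext3 <;>
    simp only [rot_coord, cross0, cross1, cross2, inner3, add_coord, mul_zero, add_zero] <;> ring

lemma rot_smul (u : E3) (φ : ℝ) (r : ℝ) (x : E3) : rot u φ (r • x) = r • rot u φ x := by
  apply ext3 <;>
    simp only [rot_coord, cross0, cross1, cross2, inner3, smul_coord, mul_zero, add_zero] <;> ring

lemma rot_inner (u : E3) (hu' : ‖u‖ = 1) (θ : ℝ) (x y : E3) :
    (inner ℝ (rot u θ x) (rot u θ y) : ℝ) = inner ℝ x y := by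
  have hu := (unit_iff u).mp hu'
  have hcs := Real.sin_sq_add_cos_sq θ
  simp only [inner3, rot_coord, cross0, cross1, cross2, mul_zero, add_zero]
  linear_combination ((-2) * Real.cos θ * u 0 * u 1 * x 0 * y 1 + (-2) * Real.cos θ * u 0 * u 1 * x 1 * y 0 + (-2) * Real.cos θ * u 0 * u 2 * x 0 * y 2 + (-2) * Real.cos θ * u 0 * u 2 * x 2 * y 0 + (-2) * Real.cos θ * u 0 * u 0 * x 0 * y 0 + (-2) * Real.cos θ * u 1 * u 2 * x 1 * y 2 + (-2) * Real.cos θ * u 1 * u 2 * x 2 * y 1 + (-2) * Real.cos θ * u 1 * u 1 * x 1 * y 1 + (-2) * Real.cos θ * u 2 * u 2 * x 2 * y 2 + Real.cos θ * Real.cos θ * u 0 * u 1 * x 0 * y 1 + Real.cos θ * Real.cos θ * u 0 * u 1 * x 1 * y 0 + Real.cos θ * Real.cos θ * u 0 * u 2 * x 0 * y 2 + Real.cos θ * Real.cos θ * u 0 * u 2 * x 2 * y 0 + Real.cos θ * Real.cos θ * u 0 * u 0 * x 0 * y 0 + Real.cos θ * Real.cos θ * u 1 * u 2 * x 1 * y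 2 + Real.cos θ * Real.cos θ * u 1 * u 2 * x 2 * y 1 + Real.cos θ * Real.cos θ * u 1 * u 1 * x 1 * y 1 + Real.cos θ * Real.cos θ * u 2 * u 2 * x 2 * y 2 + (-1) * Real.cos θ * Real.cos θ * x 0 * y 0 + Real.sin θ * Real.sin θ * x 1 * y 1 + Real.sin θ * Real.sin θ * x 2 * y 2 + u 0 * u 1 * x 0 * y 1 + u 0 * u 1 * x 1 * y 0 + u 0 * u 2 * x 0 * y 2 + u 0 * u 2 * x 2 * y 0 + u 0 * u 0 * x 0 * y 0 + u 1 * u 2 * x 1 * y 2 + u 1 * u 2 * x 2 * y 1 + u 1 * u 1 * x 1 * y 1 + u 2 * u 2 * x 2 * y 2 + x 0 * y 0) * hu + ((-1) * u 0 * u 1 * x 0 * y 1 + (-1) * u 0 * u 1 * x 1 * y 0 + (-1) * u 0 * u 2 * x 0 * y 2 + (-1) * u 0 * u 2 * x 2 * y 0 + (-1) * u 1 * u 2 * x 1 * y 2 + (-1) * u 1 * u 2 * x 2 * y 1 + u 1 * u 1 * x 0 * y 0 + (-1) * u 1 * u 1 * x 1 * y 1 + u 2 * u 2 * x 0 * y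 0 + (-1) * u 2 * u 2 * x 2 * y 2 + x 1 * y 1 + x 2 * y 2) * hcs

lemma norm_sq_eq {a b : ℝ} (ha : 0 ≤ a) (hb : 0 ≤ b) (h : a ^ 2 = b ^ 2) : a = b := by
  have h4 : (a - b) * (a + b) = 0 := by ring_nf; linarith
  rcases mul_eq_zero.mp h4 with h5 | h5
  · linarith
  · linarith

lemma norm_rot (u : E3) (hu : ‖u‖ = 1) (θ : ℝ) (x : E3) : ‖rot u θ x‖ = ‖x‖ := by
  have h := rot_inner u hu θ x x
  rw [real_inner_self_eq_norm_sq, real_inner_self_eq_norm_sq] at h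
  exact norm_sq_eq (norm_nonneg _) (norm_nonneg _) h

lemma rot_cross (u : E3) (hu' : ‖u‖ = 1) (θ : ℝ) (x y : E3) :
    rot u θ (cp x y) = cp (rot u θ x) (rot u θ y) := by
  have hu := (unit_iff u).mp hu'
  have hcs := Real.sin_sq_add_cos_sq θ
  symm
  apply ext3 <;>
    simp only [rot_coord, cross0, cross1, cross2, inner3, mul_zero, add_zero]
  · linear_combination ((-1) * Real.cos θ * Real.sin θ * u 1 * x 0 * y 1 + Real.cos θ * Real.sin θ * u 1 * x 1 * y 0 + (-1) * Real.cos θ * Real.sin θ * u 2 * x 0 * y 2 + Real.cos θ * Real.sin θ * u 2 * x 2 * y 0 + Real.cos θ * x 1 * y 2 + (-1) * Real.cos θ * x 2 * y 1 + Real.sin θ * u 1 * x 0 * y 1 + (-1) * Real.sin θ * u 1 * x 1 * y 0 + Real.sin θ * u 2 * x 0 * y 2 + (-1) * Real.sin θ * u 2 * x 2 * y 0 + Real.sin θ * Real.sin θ * x 1 * y 2 + (-1) * Real.sin θ * Real.sin θ * x 2 * y 1 + (-1) * x 1 * y 2 + x 2 * y 1) * hu + ((-1) * u 0 * u 1 *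 x 0 * y 2 + u 0 * u 1 * x 2 * y 0 + u 0 * u 2 * x 0 * y 1 + (-1) * u 0 * u 2 * x 1 * y 0 + (-1) * u 1 * u 1 * x 1 * y 2 + u 1 * u 1 * x 2 * y 1 + (-1) * u 2 * u 2 * x 1 * y 2 + u 2 * u 2 * x 2 * y 1 + x 1 * y 2 + (-1) * x 2 * y 1) * hcs
  · linear_combination (Real.cos θ * Real.sin θ * u 0 * x 0 * y 1 + (-1) * Real.cos θ * Real.sin θ * u 0 * x 1 * y 0 + (-1) * Real.cos θ * Real.sin θ * u 2 * x 1 * y 2 + Real.cos θ * Real.sin θ * u 2 * x 2 * y 1 + (-1) * Real.cos θ * x 0 * y 2 + Real.cos θ * x 2 * y 0 + Real.cos θ * Real.cos θ * x 0 * y 2 + (-1) * Real.cos θ * Real.cos θ * x 2 * y 0 + (-1) * Real.sin θ * u 0 * x 0 * y 1 + Real.sin θ * u 0 * x 1 * y 0 + Real.sin θ * u 2 * x 1 * y 2 + (-1) * Real.sin θ * u 2 * x 2 * y 1) * hu + (u 0 * u 1 * x 1 * y 2 + (-1) * u 0 * u 1 * x 2 * y 1 + u 1 * u 2 * x 0 *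 y 1 + (-1) * u 1 * u 2 * x 1 * y 0 + (-1) * u 1 * u 1 * x 0 * y 2 + u 1 * u 1 * x 2 * y 0) * hcs
  · linear_combination (Real.cos θ * Real.sin θ * u 0 * x 0 * y 2 + (-1) * Real.cos θ * Real.sin θ * u 0 * x 2 * y 0 + Real.cos θ * Real.sin θ * u 1 * x 1 * y 2 + (-1) * Real.cos θ * Real.sin θ * u 1 * x 2 * y 1 + Real.cos θ * x 0 * y 1 + (-1) * Real.cos θ * x 1 * y 0 + (-1) * Real.cos θ * Real.cos θ * x 0 * y 1 + Real.cos θ * Real.cos θ * x 1 * y 0 + (-1) * Real.sin θ * u 0 * x 0 * y 2 + Real.sin θ * u 0 * x 2 * y 0 + (-1) * Real.sin θ * u 1 * x 1 * y 2 + Real.sin θ * u 1 * x 2 * y 1) * hu + (u 0 * u 2 * x 1 * y 2 + (-1) * u 0 * u 2 * x 2 * y 1 + (-1) * u 1 * u 2 * x 0 * y 2 + u 1 * u 2 * x 2 * y 0 + u 2 * u 2 * x 0 * y 1 + (-1) * u 2 * u 2 * x 1 * y 0) * hcs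

lemma rot_axis (u : E3) (hu' : ‖u‖ = 1) (θ : ℝ) : rot u θ u = u := by
  have hu := (unit_iff u).mp hu'
  apply ext3 <;>
    simp only [rot_coord, cross0, cross1, cross2, inner3, mul_zero, add_zero]
  · linear_combination ((-1) * Real.cos θ * u 0 + u 0) * hu
  · linear_combination ((-1) * Real.cos θ * u 1 + u 1) * hu
  · linear_combination ((-1) * Real.cos θ * u 2 + u 2) * hu

lemma cap_inner (u b : E3) (hu' : ‖u‖ = 1) (θ : ℝ) :
    (inner ℝ u (rot b θ u) : ℝ) = Real.cos θ + (1 - Real.cos θ) * (inner ℝ u b : ℝ) ^ 2 := by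
  have hu := (unit_iff u).mp hu'
  simp only [inner3, rot_coord, cross0, cross1, cross2, mul_zero, add_zero]
  linear_combination (Real.cos θ) * hu

lemma ax_inner (v u : E3) (hv' : ‖v‖ = 1) (θ : ℝ) :
    (inner ℝ v (rot v θ u) : ℝ) = inner ℝ v u := by
  have hv := (unit_iff v).mp hv'
  simp only [inner3, rot_coord, cross0, cross1, cross2, mul_zero, add_zero]
  linear_combination ((-1) * Real.cos θ * u 0 * v 0 + (-1) * Real.cos θ * u 1 * v 1 + (-1) * Real.cos θ * u 2 * v 2 + u 0 * v 0 + u 1 * v 1 + u 2 * v 2) * hv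

lemma double_cross (a b c : E3) :
    cp a (cp b c) = (inner ℝ a c : ℝ) • b - (inner ℝ a b : ℝ) • c := by
  apply ext3 <;>
    simp only [cross0, cross1, cross2, inner3, sub_coord, smul_coord] <;> ring

lemma triple_perm (a b c : E3) :
    (inner ℝ (cp a b) c : ℝ) = (inner ℝ a (cp b c) : ℝ) := by
  simp only [inner3, cross0, cross1, cross2]; ring

lemma inner_self_cross (a b : E3) : (inner ℝ a (cp a b) : ℝ) = 0 := by
  simp only [inner3, cross0, cross1, cross2]; ring

lemma inner_cross_right (a b : E3) : (inner ℝ b (cp a b) : ℝ) = 0 := by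
  simp only [inner3, cross0, cross1, cross2]; ring

lemma lagrange (a b : E3) :
    (inner ℝ (cp a b) (cp a b) : ℝ) = (inner ℝ a a : ℝ) * (inner ℝ b b : ℝ) - (inner ℝ a b : ℝ) ^ 2 := by
  simp only [inner3, cross0, cross1, cross2]; ring

lemma cross_smul_right (a : E3) (r : ℝ) (b : E3) : cp a (r • b) = r • cp a b := by
  apply ext3 <;> simp only [cross0, cross1, cross2, smul_coord] <;> ring

lemma cross_add_right (a b c : E3) : cp a (b + c) = cp a b + cp a c := by
  apply ext3 <;> simp only [cross0, cross1, cross2, add_coord] <;> ring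

lemma cross_self_e (a : E3) : cp a a = 0 := by
  apply ext3 <;> simp only [cross0, cross1, cross2, zero_coord] <;> ring

lemma unit_inner {u : E3} (hu : ‖u‖ = 1) : (inner ℝ u u : ℝ) = 1 := by
  rw [real_inner_self_eq_norm_sq, hu]; norm_num

lemma norm_of_inner_one {u : E3} (h : (inner ℝ u u : ℝ) = 1) : ‖u‖ = 1 := by
  rw [real_inner_self_eq_norm_sq] at h
  exact norm_sq_eq (norm_nonneg _) zero_le_one (by rw [h]; norm_num)

lemma cp_zero (a : E3) : cp a 0 = 0 := by
  apply ext3 <;> simp only [cross0, cross1, cross2, zero_coord] <;> ring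

lemma cross_anti (a b : E3) : cp a b = -cp b a := by
  apply ext3 <;> simp only [cross0, cross1, cross2, neg_coord] <;> ring

lemma expand (w X Y : E3) (hw : (inner ℝ w w : ℝ) = 1) (hX : (inner ℝ w X : ℝ) = 0)
    (hY : (inner ℝ w Y : ℝ) = 0) :
    (inner ℝ X X : ℝ) • Y = (inner ℝ X Y : ℝ) • X + (inner ℝ (cp w X) Y : ℝ) • cp w X := by
  have h1 : cp w (cp X Y) = 0 := by
    rw [double_cross, hX, hY]; simp
  have h3 := double_cross w w (cp X Y)
  rw [h1, cp_zero, hw, one_smul] at h3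
  have h2 : cp X Y = (inner ℝ w (cp X Y) : ℝ) • w := (sub_eq_zero.mp h3.symm).symm
  have h4 := double_cross X X Y
  rw [h2, cross_smul_right, cross_anti X w, smul_neg] at h4
  rw [triple_perm]
  have h6 : (inner ℝ X X : ℝ) • Y - (inner ℝ X Y : ℝ) • X
      = (inner ℝ w (cp X Y) : ℝ) • cp w X := by
    rw [← neg_sub, ← h4, neg_neg]
  rw [← h6]; abel

lemma exists_cos_sin {a b : ℝ} (h : a ^ 2 + b ^ 2 = 1) :
    ∃ θ : ℝ, Real.cos θ = a ∧ Real.sin θ = b := by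
  have hz : (⟨a, b⟩ : ℂ) ≠ 0 := by
    intro h0
    rw [Complex.ext_iff] at h0
    simp only [Complex.zero_re, Complex.zero_im] at h0
    obtain ⟨h1, h2⟩ := h0
    rw [h1, h2] at h; norm_num at h
  have habs : ‖(⟨a, b⟩ : ℂ)‖ = 1 := by
    rw [Complex.norm_def, Complex.normSq_mk]
    rw [show a * a + b * b = 1 by nlinarith]
    exact Real.sqrt_one
  refine ⟨Complex.arg ⟨a, b⟩, ?_, ?_⟩
  · rw [Complex.cos_arg hz, habs]; simp
  · rw [Complex.sin_arg, habs]; simp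

lemma exists_unit_orth (u a : E3) :
    ∃ e : E3, ‖e‖ = 1 ∧ (inner ℝ e u : ℝ) = 0 ∧ (inner ℝ e a : ℝ) = 0 := by
  classical
  set K : Submodule ℝ E3 := Submodule.span ℝ ({u, a} : Set E3) with hK
  have hKne : Kᗮ ≠ ⊥ := by
    intro hbot
    have htop : K = ⊤ := Submodule.orthogonal_eq_bot_iff.mp hbot
    have hcard : ({u, a} : Set E3).toFinset.card ≤ 2 := by
      rw [Set.toFinset_insert, Set.toFinset_singleton]
      exact (Finset.card_insert_le _ _).trans (by simp)
    have hfin : Module.finrank ℝ K ≤ 2 :=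
      le_trans (finrank_span_le_card ({u, a} : Set E3)) hcard
    rw [htop, finrank_top] at hfin
    rw [finrank_euclideanSpace_fin] at hfin
    norm_num at hfin
  obtain ⟨z, hzK, hz0⟩ := Submodule.exists_mem_ne_zero_of_ne_bot hKne
  refine ⟨‖z‖⁻¹ • z, norm_smul_inv_norm hz0, ?_, ?_⟩
  · rw [real_inner_smul_left]
    have : (inner ℝ z u : ℝ) = 0 :=
      (Submodule.mem_orthogonal' K z).mp hzK u (Submodule.subset_span (by simp))
    rw [this]; ring
  · rw [real_inner_smul_left]
    have : (inner ℝ z a : ℝ) = 0 :=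
      (Submodule.mem_orthogonal' K z).mp hzK a (Submodule.subset_span (by simp))
    rw [this]; ring

lemma rot_def' (u : E3) (φ : ℝ) (x : E3) :
    rot u φ x = Real.cos φ • x + Real.sin φ • cp u x
      + ((1 - Real.cos φ) * (inner ℝ u x : ℝ)) • u := rfl

lemma exists_unit_inner (u : E3) (hu : ‖u‖ = 1) (r : ℝ) (hr1 : -1 ≤ r) (hr2 : r ≤ 1) :
    ∃ b : E3, ‖b‖ = 1 ∧ (inner ℝ u b : ℝ) = r := by
  obtain ⟨e, he1, heu, -⟩ := exists_unit_orth u u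
  have heu' : (inner ℝ u e : ℝ) = 0 := by rw [real_inner_comm]; exact heu
  have hs2 : Real.sqrt (1 - r ^ 2) ^ 2 = 1 - r ^ 2 := Real.sq_sqrt (by nlinarith)
  refine ⟨r • u + Real.sqrt (1 - r ^ 2) • e, ?_, ?_⟩
  · apply norm_of_inner_one
    simp only [inner_add_left, inner_add_right, real_inner_smul_left, real_inner_smul_right,
      unit_inner hu, unit_inner he1, heu, heu']
    nlinarith
  · simp only [inner_add_right, real_inner_smul_right, unit_inner hu, heu']
    ring

lemma exists_rot_eq (a x y : E3) (ha : ‖a‖ = 1) (hx : ‖x‖ = 1) (hy : ‖y‖ = 1)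
    (hxy : (inner ℝ a x : ℝ) = inner ℝ a y) : ∃ θ : ℝ, rot a θ x = y := by
  obtain ⟨p, hp⟩ : ∃ p : ℝ, (inner ℝ a x : ℝ) = p := ⟨_, rfl⟩
  have hpy : (inner ℝ a y : ℝ) = p := by rw [← hxy, hp]
  obtain ⟨X, hX⟩ : ∃ X : E3, x - p • a = X := ⟨_, rfl⟩
  obtain ⟨Y, hY⟩ : ∃ Y : E3, y - p • a = Y := ⟨_, rfl⟩
  have haa := unit_inner ha
  have haX : (inner ℝ a X : ℝ) = 0 := by
    rw [← hX, inner_sub_right, real_inner_smul_right, haa, hp]; ring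
  have haY : (inner ℝ a Y : ℝ) = 0 := by
    rw [← hY, inner_sub_right, real_inner_smul_right, haa, hpy]; ring
  have hXX : (inner ℝ X X : ℝ) = 1 - p ^ 2 := by
    rw [← hX, inner_sub_sub_self, real_inner_smul_right, real_inner_smul_left,
      real_inner_smul_left, real_inner_smul_right, haa, real_inner_comm a x, hp,
      unit_inner hx]
    ring
  have hYY : (inner ℝ Y Y : ℝ) = 1 - p ^ 2 := by
    rw [← hY, inner_sub_sub_self, real_inner_smul_right, real_inner_smul_left,
      real_inner_smul_left, real_inner_smul_right, haa, real_inner_comm a y, hpy,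
      unit_inner hy]
    ring
  have hxX : x = X + p • a := by rw [← hX]; abel
  have hyY : y = Y + p • a := by rw [← hY]; abel
  by_cases hdeg : (1 : ℝ) - p ^ 2 = 0
  · have hX0 : X = 0 := inner_self_eq_zero.mp (by rw [hXX, hdeg])
    have hY0 : Y = 0 := inner_self_eq_zero.mp (by rw [hYY, hdeg])
    refine ⟨0, ?_⟩
    rw [rot_zero, hxX, hyY, hX0, hY0]
  · obtain ⟨q, hq⟩ : ∃ q : ℝ, (inner ℝ X Y : ℝ) = q := ⟨_, rfl⟩
    obtain ⟨t, ht⟩ : ∃ t : ℝ, (inner ℝ (cp a X) Y : ℝ) = t := ⟨_, rfl⟩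
    have hexp : (1 - p ^ 2) • Y = q • X + t • cp a X := by
      rw [← hq, ← ht, ← hXX]
      exact expand a X Y haa haX haY
    have hqs : q ^ 2 + t ^ 2 = (1 - p ^ 2) ^ 2 := by
      have h5 := congrArg (fun z : E3 => (inner ℝ Y z : ℝ)) hexp
      simp only [inner_add_right, real_inner_smul_right] at h5
      have hYX : (inner ℝ Y X : ℝ) = q := by rw [real_inner_comm]; exact hq
      have hYcp : (inner ℝ Y (cp a X) : ℝ) = t := by rw [real_inner_comm]; exact ht
      rw [hYX, hYcp, hYY] at h5
      nlinarith [h5]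
    have hqr : (q / (1 - p ^ 2)) ^ 2 + (t / (1 - p ^ 2)) ^ 2 = 1 := by
      field_simp
      nlinarith [hqs]
    obtain ⟨θ, hcos, hsin⟩ := exists_cos_sin hqr
    refine ⟨θ, ?_⟩
    have hax : cp a x = cp a X := by
      rw [hxX, cross_add_right, cross_smul_right, cross_self_e]
      simp
    have hcos' : Real.cos θ * (1 - p ^ 2) = q := by rw [hcos]; field_simp
    have hsin' : Real.sin θ * (1 - p ^ 2) = t := by rw [hsin]; field_simp
    have key : ((1 : ℝ) - p ^ 2) • rot a θ x = ((1 : ℝ) - p ^ 2) • y := by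
      rw [rot_def', hax, hp, hxX, hyY]
      rw [smul_add ((1:ℝ) - p ^ 2) Y, hexp]
      match_scalars
      · linear_combination hcos'
      · ring
      · linear_combination hsin'
    exact smul_right_injective E3 hdeg key

lemma exists_rot_orth (w u a : E3) (hw : ‖w‖ = 1) (hu : ‖u‖ = 1) (ha : ‖a‖ = 1)
    (hwu : (inner ℝ w u : ℝ) = 0) (hwa : (inner ℝ w a : ℝ) = 0) : ∃ φ : ℝ, rot w φ u = a := by
  have hexp := expand w u a (unit_inner hw) hwu hwa
  rw [unit_inner hu, one_smul] at hexp
  obtain ⟨q, hq⟩ : ∃ q : ℝ, (inner ℝ u a : ℝ) = q := ⟨_, rfl⟩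
  obtain ⟨t, ht⟩ : ∃ t : ℝ, (inner ℝ (cp w u) a : ℝ) = t := ⟨_, rfl⟩
  rw [hq, ht] at hexp
  have hqt : q ^ 2 + t ^ 2 = 1 := by
    have h5 := congrArg (fun z : E3 => (inner ℝ a z : ℝ)) hexp
    simp only [inner_add_right, real_inner_smul_right] at h5
    have h6 : (inner ℝ a u : ℝ) = q := by rw [real_inner_comm]; exact hq
    have h7 : (inner ℝ a (cp w u) : ℝ) = t := by rw [real_inner_comm]; exact ht
    rw [h6, h7, unit_inner ha] at h5
    nlinarith [h5]
  obtain ⟨φ, hc, hs⟩ := exists_cos_sin hqt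
  refine ⟨φ, ?_⟩
  rw [rot_def', hwu, hc, hs, mul_zero, zero_smul, add_zero]
  exact hexp.symm

def Pres (f : E3 → E3) : Prop :=
  (∀ x y : E3, (inner ℝ (f x) (f y) : ℝ) = inner ℝ x y) ∧
  (∀ x y : E3, f (cp x y) = cp (f x) (f y)) ∧
  (∀ x y : E3, f (x + y) = f x + f y) ∧
  (∀ (r : ℝ) (x : E3), f (r • x) = r • f x)

lemma pres_rot (u : E3) (hu : ‖u‖ = 1) (θ : ℝ) : Pres (rot u θ) :=
  ⟨rot_inner u hu θ, fun x y => (rot_cross u hu θ x y), rot_add u θ,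
    fun r x => rot_smul u θ r x⟩

lemma pres_conj {f : E3 → E3} (hf : Pres f) (w : E3) (φ : ℝ) (x : E3) :
    f (rot w φ x) = rot (f w) φ (f x) := by
  obtain ⟨hi, hc, hadd, hsmul⟩ := hf
  rw [rot_def', rot_def' (f w), hadd, hadd, hsmul, hsmul, hsmul, hc, hi]

def Good (S : Set E3) (w : E3) : Prop := ∀ φ : ℝ, rot w φ '' S = S

lemma good_transport (S : Set E3) (f : E3 → E3) (hf : Pres f) (hfS : f '' S = S)
    (w : E3) (hw : Good S w) : Good S (f w) := by
  intro φ
  conv_lhs => rw [← hfS]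
  rw [Set.image_image]
  have heq : (fun x => rot (f w) φ (f x)) = fun x => f (rot w φ x) :=
    funext fun x => (pres_conj hf w φ x).symm
  rw [heq, ← Set.image_image, hw φ, hfS]

lemma good_cap (S : Set E3) (u b : E3) (hu : ‖u‖ = 1) (hb : ‖b‖ = 1)
    (hGu : Good S u) (hGb : Good S b) (y : E3) (hy : ‖y‖ = 1)
    (hyt : 2 * (inner ℝ u b : ℝ) ^ 2 - 1 ≤ (inner ℝ u y : ℝ)) : Good S y := by
  have hcs1 : (inner ℝ u y : ℝ) ≤ 1 := by
    have h := real_inner_le_norm u y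
    rw [hu, hy] at h; linarith
  by_cases hc : (inner ℝ u b : ℝ) ^ 2 = 1
  · have h2 : (inner ℝ u y : ℝ) = 1 := by nlinarith
    have h3 : u = y := (inner_eq_one_iff_of_norm_eq_one hu hy).mp h2
    rw [← h3]; exact hGu
  · have hcle : (inner ℝ u b : ℝ) ^ 2 ≤ 1 := by
      have h := abs_real_inner_le_norm u b
      rw [hu, hb] at h
      nlinarith [h, abs_nonneg (inner ℝ u b : ℝ), sq_abs (inner ℝ u b : ℝ)]
    have hc1 : (inner ℝ u b : ℝ) ^ 2 < 1 := lt_of_le_of_ne hcle hc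
    have hpos : (0 : ℝ) < 1 - (inner ℝ u b : ℝ) ^ 2 := by linarith
    set r : ℝ := ((inner ℝ u y : ℝ) - (inner ℝ u b : ℝ) ^ 2) / (1 - (inner ℝ u b : ℝ) ^ 2) with hr
    have hrlow : -1 ≤ r := by
      rw [hr, le_div_iff₀ hpos]
      nlinarith
    have hrhigh : r ≤ 1 := by
      rw [hr, div_le_one₀ hpos]
      nlinarith
    set θ : ℝ := Real.arccos r with hθ
    have hcosθ : Real.cos θ = r := Real.cos_arccos hrlow hrhigh
    have hGx : Good S (rot b θ u) := good_transport S (rot b θ) (pres_rot b hb θ) (hGb θ) u hGu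
    have hx1 : ‖rot b θ u‖ = 1 := by rw [norm_rot b hb θ u, hu]
    have hix : (inner ℝ u (rot b θ u) : ℝ) = (inner ℝ u y : ℝ) := by
      obtain ⟨cc, hcc⟩ : ∃ cc : ℝ, (inner ℝ u b : ℝ) = cc := ⟨_, rfl⟩
      obtain ⟨tt, htt⟩ : ∃ tt : ℝ, (inner ℝ u y : ℝ) = tt := ⟨_, rfl⟩
      have hpos' : (0:ℝ) < 1 - cc ^ 2 := by rw [← hcc]; exact hpos
      have hne0 : (1:ℝ) - cc ^ 2 ≠ 0 := ne_of_gt hpos'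
      rw [cap_inner u b hu θ, hcosθ, hr, hcc, htt]
      field_simp
      ring
    obtain ⟨ψ, hψ⟩ := exists_rot_eq u (rot b θ u) y hu hx1 hy hix
    rw [← hψ]
    exact good_transport S (rot u ψ) (pres_rot u hu ψ) (hGu ψ) (rot b θ u) hGx

lemma good_all (S : Set E3) (u u' : E3) (hu : ‖u‖ = 1) (hu' : ‖u'‖ = 1)
    (hGu : Good S u) (hGu' : Good S u') (hne : u' ≠ u) (hne' : u' ≠ -u) :
    ∀ w : E3, ‖w‖ = 1 → Good S w := by
  have hlt : (inner ℝ u u' : ℝ) < 1 :=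
    (inner_lt_one_iff_real_of_norm_eq_one hu hu').mpr (fun h => hne h.symm)
  have hgt : -1 < (inner ℝ u u' : ℝ) := by
    have hnm : ‖-u'‖ = 1 := by rw [norm_neg]; exact hu'
    have h2 : (inner ℝ u (-u') : ℝ) < 1 :=
      (inner_lt_one_iff_real_of_norm_eq_one hu hnm).mpr
        (fun h => hne' (by rw [← neg_neg u', ← h]))
    rw [inner_neg_right] at h2
    linarith
  have habs : |(inner ℝ u u' : ℝ)| < 1 := abs_lt.mpr ⟨hgt, hlt⟩
  set δ : ℝ := Real.arccos |(inner ℝ u u' : ℝ)| with hδ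
  have hδpos : 0 < δ := Real.arccos_pos.mpr habs
  have hδle : δ ≤ Real.pi / 2 := Real.arccos_le_pi_div_two.mpr (abs_nonneg _)
  have hcosδ : Real.cos δ = |(inner ℝ u u' : ℝ)| :=
    Real.cos_arccos (by linarith [abs_nonneg (inner ℝ u u' : ℝ)]) (le_of_lt habs)
  have hstep : ∀ k : ℕ, ∀ y : E3, ‖y‖ = 1 →
      Real.cos (2 ^ (k + 1) * δ) ≤ (inner ℝ u y : ℝ) → Good S y := by
    intro k
    induction k with
    | zero =>
      intro y hy hyt
      apply good_cap S u u' hu hu' hGu hGu' y hy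
      have hc2 : Real.cos (2 ^ 1 * δ) = 2 * (inner ℝ u u' : ℝ) ^ 2 - 1 := by
        rw [show (2 : ℝ) ^ 1 * δ = 2 * δ by ring, Real.cos_two_mul, hcosδ, sq_abs]
      rw [hc2] at hyt
      linarith
    | succ k ih =>
      intro y hy hyt
      obtain ⟨b, hb1, hbu⟩ := exists_unit_inner u hu (Real.cos (2 ^ (k + 1) * δ))
        (Real.neg_one_le_cos _) (Real.cos_le_one _)
      have hGb : Good S b := ih b hb1 (le_of_eq hbu.symm)
      apply good_cap S u b hu hb1 hGu hGb y hy
      have hc2 : Real.cos (2 ^ (k + 1 + 1) * δ) = 2 * (inner ℝ u b : ℝ) ^ 2 - 1 := by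
        rw [show (2 : ℝ) ^ (k + 1 + 1) * δ = 2 * (2 ^ (k + 1) * δ) by ring, Real.cos_two_mul,
          hbu]
      rw [hc2] at hyt
      linarith
  have hex : ∃ k : ℕ, Real.pi / 2 ≤ 2 ^ (k + 1) * δ := by
    obtain ⟨n, hn⟩ := pow_unbounded_of_one_lt (Real.pi / 2 / δ) (by norm_num : (1:ℝ) < 2)
    refine ⟨n, ?_⟩
    have h2 : Real.pi / 2 / δ < 2 ^ n := hn
    have h3 : (2:ℝ) ^ n ≤ 2 ^ (n + 1) := by
      apply pow_le_pow_right₀ (by norm_num) (by omega)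
    have := (div_lt_iff₀ hδpos).mp h2
    nlinarith [pow_pos (show (0:ℝ) < 2 by norm_num) n]
  classical
  set k : ℕ := Nat.find hex with hk
  have hk1 : Real.pi / 2 ≤ 2 ^ (k + 1) * δ := Nat.find_spec hex
  have hk2 : 2 ^ (k + 1) * δ ≤ Real.pi := by
    rcases Nat.eq_zero_or_pos k with hk0 | hkpos
    · rw [hk0]
      norm_num
      linarith
    · have hmin : ¬ Real.pi / 2 ≤ 2 ^ (k - 1 + 1) * δ := Nat.find_min hex (by omega)
      push_neg at hmin
      have : (2:ℝ) ^ (k + 1) = 2 * 2 ^ (k - 1 + 1) := by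
        rw [← pow_succ']
        congr 1
        omega
      rw [this]
      nlinarith
  have hcosneg : Real.cos (2 ^ (k + 1) * δ) ≤ 0 :=
    Real.cos_nonpos_of_pi_div_two_le_of_le hk1 (by linarith [Real.pi_pos])
  obtain ⟨b0, hb01, hb0u⟩ := exists_unit_inner u hu 0 (by norm_num) (by norm_num)
  have hGb0 : Good S b0 := hstep k b0 hb01 (by rw [hb0u]; exact hcosneg)
  intro w hw
  apply good_cap S u b0 hu hb01 hGu hGb0 w hw
  rw [hb0u]
  have h := abs_real_inner_le_norm u w
  rw [hu, hw] at h
  have := neg_abs_le (inner ℝ u w : ℝ)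
  nlinarith

def mv (A : Matrix (Fin 3) (Fin 3) ℝ) (x : E3) : E3 := WithLp.toLp 2 (A.mulVec (WithLp.ofLp x))

lemma inner_dot (x y : E3) : (inner ℝ x y : ℝ) = dotProduct (fun i => x i) (fun i => y i) := by
  rw [inner3]
  simp [dotProduct, Fin.sum_univ_three]

lemma mulVec_dot (A : Matrix (Fin 3) (Fin 3) ℝ) (hA1 : Aᵀ * A = 1) (v w : Fin 3 → ℝ) :
    dotProduct (A.mulVec v) (A.mulVec w) = dotProduct v w := by
  rw [dotProduct_mulVec, ← Matrix.vecMul_transpose, Matrix.vecMul_vecMul, hA1,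
    Matrix.vecMul_one]

lemma mv_inner (A : Matrix (Fin 3) (Fin 3) ℝ) (hA1 : Aᵀ * A = 1) (x y : E3) :
    (inner ℝ (mv A x) (mv A y) : ℝ) = inner ℝ x y := by
  rw [inner_dot, inner_dot]
  exact mulVec_dot A hA1 x y

lemma mv_coord (A : Matrix (Fin 3) (Fin 3) ℝ) (x : E3) (i : Fin 3) :
    mv A x i = A i 0 * x 0 + A i 1 * x 1 + A i 2 * x 2 := by
  simp [mv, Matrix.mulVec, dotProduct, Fin.sum_univ_three]

lemma mv_add (A : Matrix (Fin 3) (Fin 3) ℝ) (x y : E3) : mv A (x + y) = mv A x + mv A y := by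
  apply ext3 <;> simp only [mv_coord, add_coord] <;> ring

lemma mv_smul (A : Matrix (Fin 3) (Fin 3) ℝ) (r : ℝ) (x : E3) : mv A (r • x) = r • mv A x := by
  apply ext3 <;> simp only [mv_coord, smul_coord] <;> ring

lemma mv_cross (A : Matrix (Fin 3) (Fin 3) ℝ) (hA1 : Aᵀ * A = 1) (hA2 : A * Aᵀ = 1)
    (hdet : A.det = 1) (x y : E3) : mv A (cp x y) = cp (mv A x) (mv A y) := by
  have hdet3 := hdet
  rw [Matrix.det_fin_three] at hdet3
  have key : ∀ z : Fin 3 → ℝ,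
      dotProduct (A.mulVec z) (A.mulVec (crossProduct x y))
        = dotProduct (A.mulVec z) (crossProduct (A.mulVec x) (A.mulVec y)) := by
    intro z
    rw [mulVec_dot A hA1]
    rw [triple_product_eq_det, triple_product_eq_det]
    erw [Matrix.det_fin_three, Matrix.det_fin_three]
    simp only [Matrix.cons_val', Matrix.cons_val_zero, Matrix.cons_val_one, Matrix.head_cons,
      Matrix.cons_val_two, Matrix.tail_cons, Matrix.head_fin_const, Matrix.empty_val',
      Matrix.cons_val_fin_one, Matrix.mulVec, dotProduct, Fin.sum_univ_three]
    linear_combination (-(z 0 * x 1 * y 2 - z 0 * x 2 * y 1 - z 1 * x 0 * y 2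
      + z 1 * x 2 * y 0 + z 2 * x 0 * y 1 - z 2 * x 1 * y 0)) * hdet3
  set d : Fin 3 → ℝ :=
    A.mulVec (crossProduct x y) - crossProduct (A.mulVec x) (A.mulVec y) with hd
  have hsurj : A.mulVec (Aᵀ.mulVec d) = d := by
    rw [Matrix.mulVec_mulVec, hA2, Matrix.one_mulVec]
  have hkey := key (Aᵀ.mulVec d)
  rw [hsurj] at hkey
  have hzero : dotProduct d d = 0 := by
    rw [hd]
    rw [dotProduct_sub]
    rw [sub_eq_zero]
    exact hkey
  have hd0 : d = 0 := dotProduct_self_eq_zero.mp hzero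
  have : A.mulVec (crossProduct x y) = crossProduct (A.mulVec x) (A.mulVec y) :=
    sub_eq_zero.mp hd0
  exact congrArg (WithLp.toLp 2) this

lemma pres_mv (A : Matrix (Fin 3) (Fin 3) ℝ) (hA1 : Aᵀ * A = 1) (hA2 : A * Aᵀ = 1)
    (hdet : A.det = 1) : Pres (mv A) :=
  ⟨mv_inner A hA1, mv_cross A hA1 hA2 hdet, mv_add A, mv_smul A⟩

lemma pres_comp {f g : E3 → E3} (hf : Pres f) (hg : Pres g) : Pres (fun x => f (g x)) := by
  obtain ⟨hfi, hfc, hfa, hfs⟩ := hf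
  obtain ⟨hgi, hgc, hga, hgs⟩ := hg
  refine ⟨fun x y => ?_, fun x y => ?_, fun x y => ?_, fun r x => ?_⟩
  · show (inner ℝ (f (g x)) (f (g y)) : ℝ) = inner ℝ x y
    rw [hfi, hgi]
  · show f (g (cp x y)) = cp (f (g x)) (f (g y))
    rw [hgc, hfc]
  · show f (g (x + y)) = f (g x) + f (g y)
    rw [hga, hfa]
  · show f (g (r • x)) = r • f (g x)
    rw [hgs, hfs]

lemma expand_total (u e1 : E3) (hu : ‖u‖ = 1) (he1 : ‖e1‖ = 1) (hue1 : (inner ℝ u e1 : ℝ) = 0)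
    (x : E3) :
    x = (inner ℝ u x : ℝ) • u + ((inner ℝ e1 x : ℝ) • e1 + (inner ℝ (cp u e1) x : ℝ) • cp u e1) := by
  have hY : (inner ℝ u (x - (inner ℝ u x : ℝ) • u) : ℝ) = 0 := by
    rw [inner_sub_right, real_inner_smul_right, unit_inner hu]; ring
  have hexp := expand u e1 (x - (inner ℝ u x : ℝ) • u) (unit_inner hu) hue1 hY
  rw [unit_inner he1, one_smul] at hexp
  have h1 : (inner ℝ e1 (x - (inner ℝ u x : ℝ) • u) : ℝ) = inner ℝ e1 x := by
    rw [inner_sub_right, real_inner_smul_right, real_inner_comm u e1, hue1]; ring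
  have h2 : (inner ℝ (cp u e1) (x - (inner ℝ u x : ℝ) • u) : ℝ) = inner ℝ (cp u e1) x := by
    rw [inner_sub_right, real_inner_smul_right, real_inner_comm u (cp u e1),
      inner_self_cross]; ring
  rw [h1, h2] at hexp
  rw [← hexp]
  abel

lemma euler_decomp (S : Set E3) (u : E3) (hu : ‖u‖ = 1)
    (hAll : ∀ w : E3, ‖w‖ = 1 → Good S w) (A : Matrix (Fin 3) (Fin 3) ℝ)
    (hA1 : Aᵀ * A = 1) (hA2 : A * Aᵀ = 1) (hdet : A.det = 1) :
    (fun x : E3 => WithLp.toLp 2 (A.mulVec (WithLp.ofLp x))) '' S = S := by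
  have hP : Pres (mv A) := pres_mv A hA1 hA2 hdet
  have ha : ‖mv A u‖ = 1 := by
    apply norm_of_inner_one
    rw [mv_inner A hA1, unit_inner hu]
  obtain ⟨w, hw1, hwu, hwa⟩ := exists_unit_orth u (mv A u)
  have hwu' : (inner ℝ w u : ℝ) = 0 := hwu
  obtain ⟨φ, hφ⟩ := exists_rot_orth w u (mv A u) hw1 hu ha hwu hwa
  set C : E3 → E3 := fun x => rot w (-φ) (mv A x) with hC
  have hPC : Pres C := pres_comp (pres_rot w hw1 (-φ)) hP
  have hCu : C u = u := by
    show rot w (-φ) (mv A u) = u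
    rw [← hφ, rot_rot w hw1, neg_add_cancel, rot_zero]
  obtain ⟨e1, he11, he1u, -⟩ := exists_unit_orth u u
  have hue1 : (inner ℝ u e1 : ℝ) = 0 := by rw [real_inner_comm]; exact he1u
  have he2n : ‖cp u e1‖ = 1 := by
    apply norm_of_inner_one
    rw [lagrange, unit_inner hu, unit_inner he11, hue1]; ring
  have hCperp : (inner ℝ u (C e1) : ℝ) = 0 := by
    obtain ⟨hCi, -, -, -⟩ := hPC
    rw [← hCu, hCi]
    exact hue1
  have hexp := expand u e1 (C e1) (unit_inner hu) hue1 hCperp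
  rw [unit_inner he11, one_smul] at hexp
  obtain ⟨a1, ha1⟩ : ∃ a1 : ℝ, (inner ℝ e1 (C e1) : ℝ) = a1 := ⟨_, rfl⟩
  obtain ⟨b1, hb1⟩ : ∃ b1 : ℝ, (inner ℝ (cp u e1) (C e1) : ℝ) = b1 := ⟨_, rfl⟩
  rw [ha1, hb1] at hexp
  have hab : a1 ^ 2 + b1 ^ 2 = 1 := by
    obtain ⟨hCi, -, -, -⟩ := hPC
    have h5 := congrArg (fun z : E3 => (inner ℝ (C e1) z : ℝ)) hexp
    simp only [inner_add_right, real_inner_smul_right] at h5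
    have h6 : (inner ℝ (C e1) e1 : ℝ) = a1 := by rw [real_inner_comm]; exact ha1
    have h7 : (inner ℝ (C e1) (cp u e1) : ℝ) = b1 := by rw [real_inner_comm]; exact hb1
    rw [h6, h7, hCi, unit_inner he11] at h5
    nlinarith [h5]
  obtain ⟨γ, hcγ, hsγ⟩ := exists_cos_sin hab
  -- values of rot u γ on the basis
  have hrot_u : rot u γ u = u := rot_axis u hu γ
  have hrot_e1 : rot u γ e1 = a1 • e1 + b1 • cp u e1 := by
    rw [rot_def', hue1, hcγ, hsγ, mul_zero, zero_smul, add_zero]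
  have hcpue2 : cp u (cp u e1) = -e1 := by
    rw [double_cross, unit_inner hu, hue1]
    simp
  have hrot_e2 : rot u γ (cp u e1) = a1 • cp u e1 - b1 • e1 := by
    rw [rot_def', inner_self_cross, hcγ, hsγ, mul_zero, zero_smul, add_zero, hcpue2]
    rw [smul_neg]
    abel
  -- values of C on the basis
  have hCe2 : C (cp u e1) = a1 • cp u e1 - b1 • e1 := by
    obtain ⟨-, hCc, -, -⟩ := hPC
    rw [hCc, hCu, hexp, cross_add_right, cross_smul_right, cross_smul_right, hcpue2]
    rw [smul_neg]
    abel
  -- C = rot u γ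
  have hkey : ∀ x : E3, C x = rot u γ x := by
    intro x
    obtain ⟨-, -, hCa, hCs⟩ := hPC
    conv_lhs => rw [expand_total u e1 hu he11 hue1 x]
    conv_rhs => rw [expand_total u e1 hu he11 hue1 x]
    rw [hCa, hCs, hCa, hCs, hCs, hCu, hexp, hCe2]
    rw [rot_add, rot_smul, rot_add, rot_smul, rot_smul, hrot_u, hrot_e1, hrot_e2]
  -- conclude
  have hfun : (fun x : E3 => WithLp.toLp 2 (A.mulVec (WithLp.ofLp x))) = fun x => rot w φ (rot u γ x) := by
    funext x
    have h8 : rot w φ (C x) = mv A x := by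
      show rot w φ (rot w (-φ) (mv A x)) = mv A x
      rw [rot_rot w hw1, add_neg_cancel, rot_zero]
    show mv A x = rot w φ (rot u γ x)
    rw [← h8, hkey x]
  rw [hfun]
  have himg : (fun x => rot w φ (rot u γ x)) '' S = rot w φ '' (rot u γ '' S) := by
    rw [Set.image_image]
  rw [himg, hAll u hu γ, hAll w hw1 φ]

end Oblique

/-- SO(3): the subgroup of the orthogonal group of 3×3 real matrices consisting of
matrices of determinant 1 (acting on ℝ³ by matrix-vector multiplication). -/
def SO3 : Subgroup (Matrix.orthogonalGroup (Fin 3) ℝ) where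
  carrier := {A | (A : Matrix (Fin 3) (Fin 3) ℝ).det = 1}
  one_mem' := by simp
  mul_mem' := by
    intro a b ha hb
    simp only [Set.mem_setOf_eq] at *
    rw [Submonoid.coe_mul, Matrix.det_mul, ha, hb, one_mul]
  inv_mem' := by
    intro a ha
    simp only [Set.mem_setOf_eq] at *
    have h : ((a⁻¹ : Matrix.orthogonalGroup (Fin 3) ℝ) : Matrix (Fin 3) (Fin 3) ℝ) =
        star (a : Matrix (Fin 3) (Fin 3) ℝ) := rfl
    rw [h, Matrix.star_eq_conjTranspose, Matrix.det_conjTranspose, ha, star_one]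

open Oblique in
/-- If `S` has infinite-order rotational symmetry about a unit axis `u`, is not
invariant under all of SO(3), and has order-`n` rotational symmetry about a unit axis
`v` neither orthogonal nor collinear to `u`, then `n = 1`. -/
theorem oblique_axis_trivial_order (S : Set (EuclideanSpace ℝ (Fin 3)))
    (u : EuclideanSpace ℝ (Fin 3)) (hu : ‖u‖ = 1)
    (hSu : ∀ φ : ℝ, rot u φ '' S = S)
    (hnot : ¬ ∀ R : SO3, (fun x : EuclideanSpace ℝ (Fin 3) => WithLp.toLp 2 (R.1.1.mulVec (WithLp.ofLp x))) '' S = S)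
    (v : EuclideanSpace ℝ (Fin 3)) (hv : ‖v‖ = 1)
    (hvu : (inner ℝ u v : ℝ) ≠ 0) (hne : v ≠ u) (hne' : v ≠ -u)
    (n : ℕ) (hn : 1 ≤ n) (hSv : rot v (2 * Real.pi / n) '' S = S) :
    n = 1 := by
  by_contra hne1
  have hn2 : 2 ≤ n := by omega
  have hnpos : (0 : ℝ) < n := by
    have : 0 < n := by omega
    exact_mod_cast this
  have hθpos : 0 < 2 * Real.pi / n := by
    apply div_pos _ hnpos
    linarith [Real.pi_pos]
  have hθle : 2 * Real.pi / n ≤ Real.pi := by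
    rw [div_le_iff₀ hnpos]
    have h2 : (2 : ℝ) ≤ n := by exact_mod_cast hn2
    nlinarith [Real.pi_pos]
  have hGu : Good S u := hSu
  have hGu' : Good S (rot v (2 * Real.pi / n) u) :=
    good_transport S (rot v (2 * Real.pi / n)) (pres_rot v hv (2 * Real.pi / n)) hSv u hGu
  have hu'1 : ‖rot v (2 * Real.pi / n) u‖ = 1 := by
    rw [norm_rot v hv]; exact hu
  have hp1 : (inner ℝ u v : ℝ) < 1 :=
    (inner_lt_one_iff_real_of_norm_eq_one hu hv).mpr (fun h => hne h.symm)
  have hpm : -1 < (inner ℝ u v : ℝ) := by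
    have hnm : ‖-v‖ = 1 := by rw [norm_neg]; exact hv
    have h2 : (inner ℝ u (-v) : ℝ) < 1 :=
      (inner_lt_one_iff_real_of_norm_eq_one hu hnm).mpr
        (fun h => hne' (by rw [h, neg_neg]))
    rw [inner_neg_right] at h2
    linarith
  have hp2 : (inner ℝ u v : ℝ) ^ 2 < 1 := by nlinarith
  have hne_u : rot v (2 * Real.pi / n) u ≠ u := by
    intro hfix
    have hci := cap_inner u v hu (2 * Real.pi / n)
    rw [hfix, unit_inner hu] at hci
    have hzero : (1 - Real.cos (2 * Real.pi / n)) * (1 - (inner ℝ u v : ℝ) ^ 2) = 0 := by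
      linear_combination hci
    rcases mul_eq_zero.mp hzero with hz | hz
    · have hcos1 : Real.cos (2 * Real.pi / n) = 1 := by linarith
      have hb1 : -(2 * Real.pi) < 2 * Real.pi / n := by linarith [Real.pi_pos]
      have hb2 : 2 * Real.pi / n < 2 * Real.pi := by linarith [Real.pi_pos]
      have := (Real.cos_eq_one_iff_of_lt_of_lt hb1 hb2).mp hcos1
      linarith
    · linarith
  have hne_nu : rot v (2 * Real.pi / n) u ≠ -u := by
    intro hfix
    have hai := ax_inner v u hv (2 * Real.pi / n)
    rw [hfix, inner_neg_right] at hai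
    have hvz : (inner ℝ v u : ℝ) = 0 := by linarith
    apply hvu
    rw [real_inner_comm]
    exact hvz
  have hAll := good_all S u (rot v (2 * Real.pi / n) u) hu hu'1 hGu hGu' hne_u hne_nu
  apply hnot
  rintro ⟨⟨A, hAmem⟩, hAdet⟩
  have hdet' : A.det = 1 := hAdet
  have h1 : A * star A = 1 := Matrix.mem_unitaryGroup_iff.mp hAmem
  have h2 : star A * A = 1 := Matrix.mem_unitaryGroup_iff'.mp hAmem
  have hstar : star A = Matrix.transpose A := by
    ext i j
    simp [Matrix.star_apply, Matrix.transpose_apply]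
  rw [hstar] at h1 h2
  exact euler_decomp S u hu hAll A h2 h1 hdet'
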